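/- Landau's theorem: a nondecreasing sequence of nonnegative integers (s1, s2, ..., sn) is the score sequence of some tournament on n vertices if and only if for every 1 <= j <= n, s1 + s2 + ... + sj >= j(j-1)/2, with equality when j = n. -/
import Mathlib


open Finset

/-- A tournament on `Fin n`: irreflexive, and between any two distinct
vertices exactly one directed edge. -/
def IsTournament {n : ℕ} (T : Fin n → Fin n → Bool) : Prop :=
  (∀ v, T v v = false) ∧ ∀ u v : Fin n, u ≠ v → (T u v = !T v u)

/-- The score (out-degree) of a vertex in a tournament. -/
def score {n : ℕ} (T : Fin n → Fin n → Bool) (v : Fin n) : ℕ :=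
  (Finset.univ.filter (fun w => T v w = true)).card

/-- A consistently oriented (directed) cycle, given by an injective cyclic
sequence of vertices each beating the next. -/
def IsDirCycle {n m : ℕ} (T : Fin n → Fin n → Bool) (c : Fin (m + 1) → Fin n) : Prop :=
  Function.Injective c ∧ ∀ i, T (c i) (c (i + 1)) = true

/-- double counting within a set A -/
lemma double_count {n : ℕ} {T : Fin n → Fin n → Bool} (hT : IsTournament T)
    (A : Finset (Fin n)) :
    2 * (∑ v ∈ A, (A.filter (fun w => T v w = true)).card) = A.card * (A.card - 1) := by
  have h1 : ∀ v, (A.filter (fun w => T v w = true)).card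
      = ∑ w ∈ A, if T v w = true then 1 else 0 := by
    intro v; rw [Finset.card_filter]
  have h2 : (∑ v ∈ A, ∑ w ∈ A, if T v w = true then 1 else 0)
      = ∑ v ∈ A, ∑ w ∈ A, if T w v = true then 1 else 0 := Finset.sum_comm
  have key : (∑ v ∈ A, ∑ w ∈ A, ((if T v w = true then 1 else 0) + if T w v = true then 1 else 0))
      = ∑ v ∈ A, (A.card - 1) := by
    apply Finset.sum_congr rfl
    intro v hv
    have : ∀ w ∈ A, ((if T v w = true then 1 else 0) + if T w v = true then 1 else 0)
        = if w = v then 0 else 1 := by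
      intro w _
      by_cases hw : w = v
      · subst hw; simp [hT.1 w]
      · have := hT.2 v w (fun h => hw h.symm)
        simp only [if_neg hw]
        cases hvw : T v w <;> rw [hvw] at this <;> simp at this <;> simp [this]
    rw [Finset.sum_congr rfl this]
    simp [Finset.sum_ite, Finset.filter_eq', hv, Finset.filter_ne', Finset.card_erase_of_mem]
  have hS : (∑ v ∈ A, (A.filter (fun w => T v w = true)).card)
      = ∑ v ∈ A, ∑ w ∈ A, if T v w = true then 1 else 0 :=
    Finset.sum_congr rfl (fun v _ => h1 v)
  have : (∑ v ∈ A, ∑ w ∈ A, if T v w = true then 1 else 0)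
      + (∑ v ∈ A, ∑ w ∈ A, if T w v = true then 1 else 0)
      = ∑ v ∈ A, (A.card - 1) := by
    rw [← key, ← Finset.sum_add_distrib]
    exact Finset.sum_congr rfl (fun v _ => (Finset.sum_add_distrib).symm)
  rw [two_mul, hS]
  nth_rewrite 2 [h2]
  rw [this, Finset.sum_const, smul_eq_mul]

lemma card_filter_lt (n j : ℕ) (hj : j ≤ n) :
    (Finset.univ.filter (fun i : Fin n => i.val < j)).card = j := by
  rw [Finset.card_filter]
  rw [Fin.sum_univ_eq_sum_range (fun i => if i < j then 1 else 0)]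
  rw [← Finset.card_filter]
  have : (Finset.range n).filter (· < j) = Finset.range j := by
    ext x; simp [Finset.mem_range]; omega
  rw [this, Finset.card_range]

lemma necessity {n : ℕ} (s : Fin n → ℕ) {T : Fin n → Fin n → Bool}
    (hT : IsTournament T) (e : Equiv.Perm (Fin n)) (hs : ∀ i, score T (e i) = s i) :
    (∀ j : ℕ, j ≤ n →
        j * (j - 1) / 2 ≤ ∑ i ∈ Finset.univ.filter (fun i : Fin n => i.val < j), s i) ∧
      ∑ i : Fin n, s i = n * (n - 1) / 2 := by
  constructor
  · intro j hj
    set I := Finset.univ.filter (fun i : Fin n => i.val < j) with hI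
    set A := I.image e with hA
    have hcard : A.card = j := by
      rw [hA, Finset.card_image_of_injective _ e.injective, hI, card_filter_lt n j hj]
    have h1 : ∑ i ∈ I, s i = ∑ v ∈ A, score T v := by
      rw [hA, Finset.sum_image (fun a _ b _ h => e.injective h)]
      exact Finset.sum_congr rfl (fun i _ => (hs i).symm)
    have h2 : ∀ v, (A.filter (fun w => T v w = true)).card ≤ score T v := by
      intro v
      exact Finset.card_le_card (Finset.filter_subset_filter _ (Finset.subset_univ A))
    have h3 := double_count hT A
    rw [hcard] at h3
    have h4 : j * (j-1) / 2 ≤ ∑ v ∈ A, (A.filter (fun w => T v w = true)).card := by omega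
    calc j * (j-1)/2 ≤ ∑ v ∈ A, (A.filter (fun w => T v w = true)).card := h4
      _ ≤ ∑ v ∈ A, score T v := Finset.sum_le_sum (fun v _ => h2 v)
      _ = ∑ i ∈ I, s i := h1.symm
  · have h1 : ∑ i : Fin n, s i = ∑ v : Fin n, score T v := by
      rw [← Equiv.sum_comp e (fun v => score T v)]
      exact Finset.sum_congr rfl (fun i _ => (hs i).symm)
    have h3 := double_count hT (Finset.univ : Finset (Fin n))
    simp only [Finset.card_univ, Fintype.card_fin] at h3
    have h4 : ∀ v, (Finset.univ.filter (fun w => T v w = true)).card = score T v := fun v => rfl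
    simp only [h4] at h3
    omega

/-- flipping one edge u→v -/
lemma flip_edge {n : ℕ} {T : Fin n → Fin n → Bool} (hT : IsTournament T)
    {u v : Fin n} (huv : u ≠ v) (h : T u v = true) :
    ∃ T2 : Fin n → Fin n → Bool, IsTournament T2 ∧
      score T2 u = score T u - 1 ∧ score T2 v = score T v + 1 ∧
      (∀ x, x ≠ u → x ≠ v → score T2 x = score T x) ∧
      (∀ a b, (a ≠ u ∨ b ≠ v) → (a ≠ v ∨ b ≠ u) → T2 a b = T a b) := by
  refine ⟨fun a b => if a = u ∧ b = v then false else if a = v ∧ b = u then true else T a b,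
    ⟨?_, ?_⟩, ?_, ?_, ?_, ?_⟩
  · intro a
    by_cases h1 : a = u ∧ a = v
    · exact absurd (h1.1 ▸ h1.2 ▸ rfl : u = v) huv
    · by_cases h2 : a = v ∧ a = u
      · exact absurd (h2.2 ▸ h2.1 ▸ rfl : u = v) huv
      · show (if a = u ∧ a = v then false else if a = v ∧ a = u then true else T a a) = false
        rw [if_neg h1, if_neg h2]; exact hT.1 a
  · intro a b hab
    have h0 := hT.2 a b hab
    by_cases h1 : a = u ∧ b = v
    · simp [h1.1, h1.2, huv, Ne.symm huv]
    · by_cases h2 : a = v ∧ b = u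
      · simp [h2.1, h2.2, huv, Ne.symm huv]
      · have h1' : ¬ (b = v ∧ a = u) := fun hh => h1 ⟨hh.2, hh.1⟩
        have h2' : ¬ (b = u ∧ a = v) := fun hh => h2 ⟨hh.2, hh.1⟩
        show (if a = u ∧ b = v then false else if a = v ∧ b = u then true else T a b)
          = !(if b = u ∧ a = v then false else if b = v ∧ a = u then true else T b a)
        rw [if_neg h1, if_neg h2, if_neg h2', if_neg h1']
        exact h0
  · show (Finset.univ.filter _).card = _
    have : (Finset.univ.filter (fun w =>
        (if u = u ∧ w = v then false else if u = v ∧ w = u then true else T u w) = true))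
        = (Finset.univ.filter (fun w => T u w = true)).erase v := by
      ext w
      simp only [Finset.mem_filter, Finset.mem_erase, Finset.mem_univ, true_and]
      by_cases hw : w = v
      · subst hw; simp [huv]
      · simp [hw, huv]
    rw [this, Finset.card_erase_of_mem]
    · rfl
    · simp [h]
  · show (Finset.univ.filter _).card = _
    have : (Finset.univ.filter (fun w =>
        (if v = u ∧ w = v then false else if v = v ∧ w = u then true else T v w) = true))
        = insert u (Finset.univ.filter (fun w => T v w = true)) := by
      ext w
      simp only [Finset.mem_filter, Finset.mem_insert, Finset.mem_univ, true_and]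
      by_cases hw : w = u
      · subst hw; simp [Ne.symm huv]
      · simp [hw, Ne.symm huv]
    have hvu : T v u = false := by
      have := hT.2 u v huv; rw [h] at this; simpa using this.symm
    have hnm : u ∉ Finset.univ.filter (fun w => T v w = true) := by simp [hvu]
    rw [this, Finset.card_insert_of_notMem hnm]
    rfl
  · intro x hxu hxv
    show (Finset.univ.filter _).card = _
    congr 1
    apply Finset.filter_congr
    intro w _
    simp [hxu, hxv]
  · intro a b h1 h2
    have h1' : ¬ (a = u ∧ b = v) := by tauto
    have h2' : ¬ (a = v ∧ b = u) := by tauto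
    simp [h1', h2']

lemma exists_mid {n : ℕ} {T : Fin n → Fin n → Bool} (hT : IsTournament T)
    {u v : Fin n} (huv : u ≠ v) (hvu : T v u = true)
    (hsc : score T v + 2 ≤ score T u) :
    ∃ w, w ≠ u ∧ w ≠ v ∧ T u w = true ∧ T w v = true := by
  by_contra hc
  push_neg at hc
  have huv' : T u v = false := by
    have := hT.2 v u (Ne.symm huv); rw [hvu] at this; simpa using this.symm
  have hsub : insert u (Finset.univ.filter (fun w => T u w = true))
      ⊆ Finset.univ.filter (fun w => T v w = true) := by
    intro w hw
    simp only [Finset.mem_insert, Finset.mem_filter, Finset.mem_univ, true_and] at hw ⊢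
    rcases hw with rfl | hw
    · exact hvu
    · have hwu : w ≠ u := fun hh => by rw [hh, hT.1 u] at hw; exact Bool.false_ne_true hw
      have hwv : w ≠ v := fun hh => by rw [hh, huv'] at hw; exact Bool.false_ne_true hw
      have hwv2 : T w v = false := by
        have := hc w hwu hwv
        cases hh : T w v
        · rfl
        · exact absurd hh (this hw)
      have := hT.2 w v hwv; rw [hwv2] at this
      cases hh : T v w
      · rw [hh] at this; simp at this
      · rfl
  have hcard := Finset.card_le_card hsub
  rw [Finset.card_insert_of_notMem (by simp [hT.1 u])] at hcard
  have : score T u + 1 ≤ score T v := hcard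
  omega

lemma two_mul_choose2 (j : ℕ) : 2 * (j*(j-1)/2) = j*(j-1) := by
  have h : Even (j*(j-1)) := by
    rcases j with _ | m
    · simp
    · simp only [Nat.succ_sub_one]
      rw [mul_comm]
      exact Nat.even_mul_succ_self m
  exact Nat.mul_div_cancel' h.two_dvd |>.symm ▸ (Nat.mul_div_cancel' h.two_dvd)

lemma choose2_add (k j : ℕ) : (k+j)*((k+j)-1)/2 = k*(k-1)/2 + j*(j-1)/2 + k*j := by
  have h1 := two_mul_choose2 (k+j)
  have h2 := two_mul_choose2 k
  have h3 := two_mul_choose2 j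
  have hid : (k+j)*((k+j)-1) = k*(k-1)+j*(j-1)+2*(k*j) := by
    rcases k with _ | a
    · simp
    · rcases j with _ | b
      · simp
      · simp only [Nat.succ_sub_one]
        have : a + 1 + (b + 1) - 1 = a + b + 1 := by omega
        rw [this]
        ring
  have : 2 * ((k+j)*((k+j)-1)/2) = 2 * (k*(k-1)/2 + j*(j-1)/2 + k*j) := by
    rw [h1, hid]; omega
  omega

lemma sum_restrict {n k : ℕ} (hk : k ≤ n) (f : Fin n → ℕ) (p : Fin n → Prop)
    [DecidablePred p] (hp : ∀ i, p i → i.val < k) :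
    ∑ i ∈ Finset.univ.filter p, f i
      = ∑ i ∈ Finset.univ.filter (fun i : Fin k => p (Fin.castLE hk i)), f (Fin.castLE hk i) := by
  refine Finset.sum_bij'
    (fun (a : Fin n) (ha : a ∈ Finset.univ.filter p) =>
      (⟨a.val, hp a (Finset.mem_filter.mp ha).2⟩ : Fin k))
    (fun (b : Fin k) (hb : _) => Fin.castLE hk b) ?_ ?_ ?_ ?_ ?_
  · intro a ha; simp only [Finset.mem_filter, Finset.mem_univ, true_and] at ha ⊢
    exact ha
  · intro b hb; simp only [Finset.mem_filter, Finset.mem_univ, true_and] at hb ⊢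
    exact hb
  · intro a ha; rfl
  · intro b hb; rfl
  · intro a ha; rfl

lemma sum_restrict_top {n k : ℕ} (hk : k ≤ n) (f : Fin n → ℕ) (p : Fin n → Prop)
    [DecidablePred p] (hp : ∀ i, p i → k ≤ i.val) :
    ∑ i ∈ Finset.univ.filter p, f i
      = ∑ i ∈ Finset.univ.filter (fun i : Fin (n-k) => p ⟨k + i.val, by omega⟩),
          f ⟨k + i.val, by omega⟩ := by
  refine Finset.sum_bij'
    (fun (a : Fin n) (ha : a ∈ Finset.univ.filter p) =>
      (⟨a.val - k, by have := hp a (Finset.mem_filter.mp ha).2; omega⟩ : Fin (n-k)))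
    (fun (b : Fin (n-k)) (hb : _) => (⟨k + b.val, by omega⟩ : Fin n)) ?_ ?_ ?_ ?_ ?_
  · intro a ha; simp only [Finset.mem_filter, Finset.mem_univ, true_and] at ha ⊢
    have h2 := hp a ha
    have he : (⟨k + (a.val - k), by omega⟩ : Fin n) = a := Fin.ext (by simp; omega)
    rw [he]; exact ha
  · intro b hb; simp only [Finset.mem_filter, Finset.mem_univ, true_and] at hb ⊢
    exact hb
  · intro a ha
    have := hp a (Finset.mem_filter.mp ha).2
    exact Fin.ext (by simp; omega)
  · intro b hb; exact Fin.ext (by simp)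
  · intro a ha
    have := hp a (Finset.mem_filter.mp ha).2
    congr 1
    exact (Fin.ext (by simp; omega) : (⟨k + (a.val - k), by omega⟩ : Fin n) = a).symm

def psum {n : ℕ} (s : Fin n → ℕ) (j : ℕ) : ℕ :=
  ∑ i ∈ Finset.univ.filter (fun i : Fin n => i.val < j), s i

lemma psum_top {n : ℕ} (s : Fin n → ℕ) {j : ℕ} (hj : n ≤ j) : psum s j = ∑ i : Fin n, s i := by
  unfold psum
  congr 1
  apply Finset.filter_true_of_mem
  intro i _
  omega

lemma psum_succ {n : ℕ} (s : Fin n → ℕ) {j : ℕ} (hj : j < n) :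
    psum s (j+1) = psum s j + s ⟨j, hj⟩ := by
  unfold psum
  have : (Finset.univ.filter (fun i : Fin n => i.val < j+1))
      = insert ⟨j, hj⟩ (Finset.univ.filter (fun i : Fin n => i.val < j)) := by
    ext i
    simp only [Finset.mem_filter, Finset.mem_insert, Finset.mem_univ, true_and, Fin.ext_iff]
    omega
  rw [this, Finset.sum_insert (by simp)]
  ring

lemma psum_split {n k : ℕ} (hk : k < n) (s : Fin n → ℕ)
    (hsk : ∀ i : Fin n, k ≤ i.val → k ≤ s i) (j : ℕ) (hj : j ≤ n - k) :
    psum s (k + j)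
      = psum s k + (psum (fun i : Fin (n-k) => s ⟨k + i.val, by omega⟩ - k) j + j * k) := by
  classical
  have hstep1 : psum s (k+j)
      = (∑ i ∈ (Finset.univ.filter (fun i : Fin n => i.val < k+j)).filter
          (fun i => i.val < k), s i)
      + ∑ i ∈ (Finset.univ.filter (fun i : Fin n => i.val < k+j)).filter
          (fun i => ¬ i.val < k), s i := by
    exact (Finset.sum_filter_add_sum_filter_not _ _ _).symm
  have he1 : (Finset.univ.filter (fun i : Fin n => i.val < k+j)).filter (fun i => i.val < k)
      = Finset.univ.filter (fun i : Fin n => i.val < k) := by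
    rw [Finset.filter_filter]
    apply Finset.filter_congr
    intro i _; constructor
    · exact fun h => h.2
    · exact fun h => ⟨by omega, h⟩
  have he2 : (Finset.univ.filter (fun i : Fin n => i.val < k+j)).filter (fun i => ¬ i.val < k)
      = Finset.univ.filter (fun i : Fin n => i.val < k+j ∧ ¬ i.val < k) := by
    rw [Finset.filter_filter]
  rw [hstep1, he1, he2]
  have hstep2 := sum_restrict_top (le_of_lt hk) s
      (fun i : Fin n => i.val < k+j ∧ ¬ i.val < k) (fun i hi => by omega)
  rw [hstep2]
  have he3 : (Finset.univ.filter (fun i : Fin (n-k) =>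
        (k + i.val < k+j ∧ ¬ k + i.val < k)))
      = Finset.univ.filter (fun i : Fin (n-k) => i.val < j) := by
    apply Finset.filter_congr
    intro i _
    constructor
    · exact fun h => by omega
    · exact fun h => ⟨by omega, by omega⟩
  rw [he3]
  have hstep3 : ∀ i ∈ Finset.univ.filter (fun i : Fin (n-k) => i.val < j),
      s ⟨k + i.val, by omega⟩ = (s ⟨k + i.val, by omega⟩ - k) + k := by
    intro i _
    have := hsk ⟨k + i.val, by omega⟩ (by simp)
    omega
  rw [Finset.sum_congr rfl hstep3, Finset.sum_add_distrib, Finset.sum_const,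
    card_filter_lt (n-k) j hj, smul_eq_mul]
  rfl

lemma glue {n k : ℕ} (hk : k < n)
    {T₁ : Fin k → Fin k → Bool} {T₂ : Fin (n-k) → Fin (n-k) → Bool}
    (h₁ : IsTournament T₁) (h₂ : IsTournament T₂) :
    ∃ T : Fin n → Fin n → Bool, IsTournament T ∧
      (∀ v : Fin n, (hv : v.val < k) → score T v = score T₁ ⟨v.val, hv⟩) ∧
      (∀ v : Fin n, (hv : ¬ v.val < k) →
        score T v = score T₂ ⟨v.val - k, by omega⟩ + k) := by
  classical
  refine ⟨fun u w =>
    if hu : u.val < k then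
      (if hw : w.val < k then T₁ ⟨u.val, hu⟩ ⟨w.val, hw⟩ else false)
    else
      (if w.val < k then true else T₂ ⟨u.val - k, by omega⟩ ⟨w.val - k, by omega⟩),
    ⟨?_, ?_⟩, ?_, ?_⟩
  · intro v
    by_cases hv : v.val < k
    · simp only [dif_pos hv]
      exact h₁.1 _
    · simp only [dif_neg hv, if_neg hv]
      exact h₂.1 _
  · intro u w huw
    have hval : u.val ≠ w.val := fun h => huw (Fin.ext h)
    by_cases hu : u.val < k <;> by_cases hw : w.val < k
    · simp only [dif_pos hu, dif_pos hw]
      exact h₁.2 _ _ (by simp [Fin.ext_iff]; omega)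
    · simp only [dif_pos hu, dif_neg hw, if_pos hu]
      rfl
    · simp only [dif_neg hu, dif_pos hw, if_pos hw]
      rfl
    · simp only [dif_neg hu, dif_neg hw, if_neg hu, if_neg hw]
      exact h₂.2 _ _ (by simp [Fin.ext_iff]; omega)
  · intro v hv
    unfold score
    rw [Finset.card_filter, Finset.card_filter]
    rw [← Finset.sum_filter_add_sum_filter_not Finset.univ (fun w : Fin n => w.val < k)]
    have hz : ∑ w ∈ Finset.univ.filter (fun w : Fin n => ¬ w.val < k),
        (if (if hu : v.val < k then
          (if hw : w.val < k then T₁ ⟨v.val, hu⟩ ⟨w.val, hw⟩ else false)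
        else
          (if w.val < k then true else T₂ ⟨v.val - k, by omega⟩ ⟨w.val - k, by omega⟩)) = true
          then 1 else 0) = 0 := by
      apply Finset.sum_eq_zero
      intro w hw
      simp only [Finset.mem_filter] at hw
      simp [dif_pos hv, dif_neg hw.2]
    rw [hz, add_zero]
    rw [sum_restrict (le_of_lt hk) _ (fun w : Fin n => w.val < k) (fun i hi => hi)]
    have : ∀ w : Fin k, (Fin.castLE (le_of_lt hk) w).val < k := fun w => by
      simp [w.isLt]
    rw [Finset.filter_true_of_mem (fun w _ => this w)]
    apply Finset.sum_congr rfl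
    intro w _
    simp only [dif_pos hv, dif_pos (this w)]
    rfl
  · intro v hv
    unfold score
    rw [Finset.card_filter]
    rw [← Finset.sum_filter_add_sum_filter_not Finset.univ (fun w : Fin n => w.val < k)]
    have hone : ∑ w ∈ Finset.univ.filter (fun w : Fin n => w.val < k),
        (if (if hu : v.val < k then
          (if hw : w.val < k then T₁ ⟨v.val, hu⟩ ⟨w.val, hw⟩ else false)
        else
          (if w.val < k then true else T₂ ⟨v.val - k, by omega⟩ ⟨w.val - k, by omega⟩)) = true
          then 1 else 0) = k := by
      have : ∀ w ∈ Finset.univ.filter (fun w : Fin n => w.val < k),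
          (if (if hu : v.val < k then
            (if hw : w.val < k then T₁ ⟨v.val, hu⟩ ⟨w.val, hw⟩ else false)
          else
            (if w.val < k then true else T₂ ⟨v.val - k, by omega⟩ ⟨w.val - k, by omega⟩)) = true
            then 1 else 0) = 1 := by
        intro w hw
        simp only [Finset.mem_filter] at hw
        simp [dif_neg hv, if_pos hw.2]
      rw [Finset.sum_congr rfl this, Finset.sum_const, card_filter_lt n k (le_of_lt hk),
        smul_eq_mul, mul_one]
    rw [hone]
    rw [sum_restrict_top (le_of_lt hk) _ (fun w : Fin n => ¬ w.val < k) (fun i hi => by omega)]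
    have hpred : ∀ w : Fin (n-k), ¬ ((⟨k + w.val, by omega⟩ : Fin n).val < k) := fun w => by
      simp
    rw [Finset.filter_true_of_mem (fun w _ => hpred w)]
    have : ∀ w : Fin (n-k),
        (if (if hu : v.val < k then
          (if hw : (⟨k + w.val, by omega⟩ : Fin n).val < k then T₁ ⟨v.val, hu⟩ ⟨_, hw⟩ else false)
        else
          (if (⟨k + w.val, by omega⟩ : Fin n).val < k then true
            else T₂ ⟨v.val - k, by omega⟩ ⟨(⟨k + w.val, by omega⟩ : Fin n).val - k, by omega⟩))
          = true then 1 else 0)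
        = (if T₂ ⟨v.val - k, by omega⟩ w = true then 1 else 0) := by
      intro w
      have he : (⟨(⟨k + w.val, by omega⟩ : Fin n).val - k, by omega⟩ : Fin (n-k)) = w :=
        Fin.ext (by simp)
      simp only [dif_neg hv, dif_neg (hpred w), if_neg (hpred w), he]
    rw [Finset.sum_congr rfl (fun w _ => this w)]
    rw [← Finset.card_filter]
    exact Nat.add_comm _ _

set_option maxHeartbeats 1000000 in
lemma sufficiency : ∀ (n c : ℕ) (s : Fin n → ℕ),
    (∑ j ∈ Finset.Ico 1 n, (psum s j - j*(j-1)/2)) ≤ c → Monotone s →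
    (∀ j, j ≤ n → j*(j-1)/2 ≤ psum s j) → psum s n = n*(n-1)/2 →
    ∃ T : Fin n → Fin n → Bool, IsTournament T ∧
      ∃ f : Fin n → Fin n, Function.Bijective f ∧ ∀ i, score T (f i) = s i := by
  intro n
  induction n using Nat.strong_induction_on with
  | _ n IHn =>
  intro c
  induction c using Nat.strong_induction_on with
  | _ c IHc =>
  intro s hslack hmono hland heq
  by_cases hn0 : n = 0
  · subst hn0
    exact ⟨fun _ _ => false, ⟨fun v => rfl, fun u v h => u.elim0⟩, id, Function.bijective_id,
      fun i => i.elim0⟩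
  by_cases hn1 : n = 1
  · subst hn1
    have h0 : ∀ i, s i = 0 := by
      have := heq
      rw [psum_top s le_rfl] at this
      simp at this
      intro i
      have h1 : i = 0 := Subsingleton.elim i 0
      rw [h1]
      exact this
    refine ⟨fun _ _ => false, ⟨fun v => rfl, fun u v h => absurd (Subsingleton.elim u v) h⟩,
      id, Function.bijective_id, fun i => ?_⟩
    rw [h0 i]
    simp [score]
  have hn2 : 2 ≤ n := by omega
  by_cases hcase : ∃ k, 1 ≤ k ∧ k < n ∧ psum s k = k*(k-1)/2
  · obtain ⟨k, hk1, hkn, hkeq⟩ := hcase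
    have hsk : ∀ i : Fin n, k ≤ i.val → k ≤ s i := by
      have h1 : psum s (k+1) = psum s k + s ⟨k, hkn⟩ := psum_succ s hkn
      have h2 := hland (k+1) (by omega)
      have h3 : (k+1)*((k+1)-1)/2 = k*(k-1)/2 + k := by
        have := choose2_add k 1
        simpa using this
      have hbase : k ≤ s ⟨k, hkn⟩ := by omega
      intro i hi
      exact le_trans hbase (hmono (show (⟨k, hkn⟩ : Fin n) ≤ i from hi))
    have hmn : n - k < n := by omega
    set m := n - k with hm
    set s₁ : Fin k → ℕ := fun i => s (Fin.castLE (le_of_lt hkn) i) with hs₁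
    set s₂ : Fin m → ℕ := fun i => s ⟨k + i.val, by omega⟩ - k with hs₂
    have hpsum1 : ∀ j, j ≤ k → psum s₁ j = psum s j := by
      intro j hj
      unfold psum
      rw [sum_restrict (le_of_lt hkn) s (fun i : Fin n => i.val < j) (fun i hi => by omega)]
      rfl
    have hpsum2 : ∀ j, j ≤ m → psum s (k+j) = psum s k + (psum s₂ j + j*k) :=
      fun j hj => psum_split hkn s hsk j hj
    have hmono1 : Monotone s₁ := fun i j hij => hmono (by exact hij)
    have hmono2 : Monotone s₂ := by
      intro i j hij
      have hv : i.val ≤ j.val := hij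
      exact Nat.sub_le_sub_right (hmono (Fin.mk_le_mk.mpr (by omega))) k
    have hland1 : ∀ j, j ≤ k → j*(j-1)/2 ≤ psum s₁ j := by
      intro j hj
      rw [hpsum1 j hj]
      exact hland j (by omega)
    have heq1 : psum s₁ k = k*(k-1)/2 := by rw [hpsum1 k le_rfl]; exact hkeq
    have hland2 : ∀ j, j ≤ m → j*(j-1)/2 ≤ psum s₂ j := by
      intro j hj
      have h1 := hland (k+j) (by omega)
      rw [hpsum2 j hj, hkeq, choose2_add k j] at h1
      have hc : k*j = j*k := mul_comm k j
      omega
    have heq2 : psum s₂ m = m*(m-1)/2 := by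
      have hkm : k + m = n := by omega
      have h1 : psum s (k+m) = n*(n-1)/2 := by rw [hkm]; exact heq
      rw [hpsum2 m le_rfl, hkeq] at h1
      have h2 : (k+m)*((k+m)-1)/2 = k*(k-1)/2 + m*(m-1)/2 + k*m := choose2_add k m
      rw [hkm] at h2
      have hc : k*m = m*k := mul_comm k m
      omega
    obtain ⟨T₁, hT₁, f₁, hf₁, hsc₁⟩ := IHn k hkn _ s₁ le_rfl hmono1 hland1 heq1
    obtain ⟨T₂, hT₂, f₂, hf₂, hsc₂⟩ := IHn m hmn _ s₂ le_rfl hmono2 hland2 heq2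
    obtain ⟨T, hT, hsc_lo, hsc_hi⟩ := glue hkn hT₁ hT₂
    refine ⟨T, hT, fun i =>
      if h : i.val < k then Fin.castLE (le_of_lt hkn) (f₁ ⟨i.val, h⟩)
      else ⟨k + (f₂ ⟨i.val - k, by omega⟩).val, by omega⟩, ?_, ?_⟩
    · rw [← Finite.injective_iff_bijective]
      intro a b hab
      by_cases ha : a.val < k <;> by_cases hb : b.val < k
      · simp only [dif_pos ha, dif_pos hb] at hab
        have : f₁ ⟨a.val, ha⟩ = f₁ ⟨b.val, hb⟩ := by
          apply Fin.ext
          simpa [Fin.ext_iff] using hab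
        have := hf₁.1 this
        exact Fin.ext (by simpa [Fin.ext_iff] using this)
      · simp only [dif_pos ha, dif_neg hb] at hab
        exfalso
        have h1 : (Fin.castLE (le_of_lt hkn) (f₁ ⟨a.val, ha⟩)).val < k := (f₁ _).isLt
        rw [hab] at h1
        simp at h1
      · simp only [dif_neg ha, dif_pos hb] at hab
        exfalso
        have h1 : (Fin.castLE (le_of_lt hkn) (f₁ ⟨b.val, hb⟩)).val < k := (f₁ _).isLt
        rw [← hab] at h1
        simp at h1
      · simp only [dif_neg ha, dif_neg hb] at hab
        have h1 : (f₂ ⟨a.val - k, by omega⟩).val = (f₂ ⟨b.val - k, by omega⟩).val := by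
          simpa [Fin.ext_iff] using hab
        have := hf₂.1 (Fin.ext h1)
        have h2 : a.val - k = b.val - k := by simpa [Fin.ext_iff] using this
        exact Fin.ext (by omega)
    · intro i
      by_cases h : i.val < k
      · simp only [dif_pos h]
        rw [hsc_lo _ ((f₁ ⟨i.val, h⟩).isLt)]
        have he : (⟨(Fin.castLE (le_of_lt hkn) (f₁ ⟨i.val, h⟩)).val, (f₁ ⟨i.val, h⟩).isLt⟩ : Fin k)
            = f₁ ⟨i.val, h⟩ := Fin.ext rfl
        rw [he, hsc₁]
        rfl
      · simp only [dif_neg h]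
        have hge : ¬ ((⟨k + (f₂ ⟨i.val - k, by omega⟩).val, by omega⟩ : Fin n).val < k) := by
          simp
        rw [hsc_hi _ hge]
        have he : (⟨(⟨k + (f₂ ⟨i.val - k, by omega⟩).val, by omega⟩ : Fin n).val - k, by omega⟩
            : Fin m) = f₂ ⟨i.val - k, by omega⟩ := Fin.ext (by simp)
        rw [he, hsc₂]
        have := hsk i (by omega)
        show s ⟨k + (⟨i.val - k, by omega⟩ : Fin m).val, by omega⟩ - k + k = s i
        have he2 : (⟨k + (⟨i.val - k, by omega⟩ : Fin m).val, by omega⟩ : Fin n) = i :=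
          Fin.ext (by simp; omega)
        rw [he2]
        omega
  · push_neg at hcase
    have hstrict : ∀ j, 1 ≤ j → j < n → j*(j-1)/2 + 1 ≤ psum s j := by
      intro j h1 h2
      have := hland j (le_of_lt h2)
      have hne := hcase j h1 h2
      omega
    have hpz : psum s 0 = 0 := by
      unfold psum
      rw [Finset.filter_false_of_mem (fun i _ => by omega)]
      simp
    have hs0 : 1 ≤ s ⟨0, by omega⟩ := by
      have h1 := hstrict 1 le_rfl (by omega)
      have h2 : psum s 1 = psum s 0 + s ⟨0, by omega⟩ := psum_succ s (by omega)
      omega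
    set i0 : Fin n := ⟨0, by omega⟩ with hi0def
    set iL : Fin n := ⟨n-1, by omega⟩ with hiLdef
    set s' : Fin n → ℕ := fun i => if i.val = 0 then s i - 1 else if i.val = n-1 then s i + 1 else s i with hs'
    have hvi0 : (i0 : Fin n).val = 0 := rfl
    have hviL : (iL : Fin n).val = n - 1 := rfl
    have hs'i0 : s' i0 = s i0 - 1 := by
      show (if (i0:Fin n).val = 0 then s i0 - 1 else if (i0:Fin n).val = n-1 then s i0 + 1 else s i0) = s i0 - 1
      rw [if_pos hvi0]
    have hs'iL : s' iL = s iL + 1 := by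
      show (if (iL:Fin n).val = 0 then s iL - 1 else if (iL:Fin n).val = n-1 then s iL + 1 else s iL) = s iL + 1
      rw [if_neg (by omega : ¬ ((iL : Fin n).val = 0)), if_pos hviL]
    have hs'eq : ∀ i : Fin n, i ≠ i0 → i ≠ iL → s' i = s i := by
      intro i h1 h2
      show (if i.val = 0 then s i - 1 else if i.val = n-1 then s i + 1 else s i) = s i
      rw [if_neg (fun h => h1 (Fin.ext (by rw [h, hvi0]))),
        if_neg (fun h => h2 (Fin.ext (by rw [h, hviL])))]
    have hmono' : Monotone s' := by
      intro a b hab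
      have hv : a.val ≤ b.val := hab
      by_cases hb0 : b.val = 0
      · have : a = b := Fin.ext (by omega)
        rw [this]
      by_cases haL : a.val = n-1
      · have : a = b := Fin.ext (by omega)
        rw [this]
      · have h1 : s' a ≤ s a := by
          simp only [hs']
          split_ifs <;> omega
        have h2 : s b ≤ s' b := by
          simp only [hs']
          split_ifs <;> omega
        exact le_trans h1 (le_trans (hmono hab) h2)
    have hp' : ∀ j, 1 ≤ j → j ≤ n-1 → psum s' j + 1 = psum s j := by
      intro j h1 h2
      unfold psum
      have hi0mem : i0 ∈ Finset.univ.filter (fun i : Fin n => i.val < j) := by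
        simp [hi0def]; omega
      rw [← Finset.add_sum_erase _ s' hi0mem, ← Finset.add_sum_erase _ s hi0mem]
      have he : ∑ x ∈ (Finset.univ.filter (fun i : Fin n => i.val < j)).erase i0, s' x
          = ∑ x ∈ (Finset.univ.filter (fun i : Fin n => i.val < j)).erase i0, s x := by
        apply Finset.sum_congr rfl
        intro x hx
        rw [Finset.mem_erase, Finset.mem_filter] at hx
        apply hs'eq
        · exact hx.1
        · intro h
          rw [h] at hx
          simp [hiLdef] at hx
          omega
      rw [he, hs'i0]
      omega
    have hpn' : psum s' n = psum s n := by
      rw [psum_top s' le_rfl, psum_top s le_rfl]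
      have hL0 : iL ≠ i0 := by
        simp [Fin.ext_iff, hi0def, hiLdef]
        omega
      rw [← Finset.add_sum_erase _ s' (Finset.mem_univ i0),
        ← Finset.add_sum_erase _ s (Finset.mem_univ i0),
        ← Finset.add_sum_erase _ s' (Finset.mem_erase.mpr ⟨hL0, Finset.mem_univ iL⟩),
        ← Finset.add_sum_erase _ s (Finset.mem_erase.mpr ⟨hL0, Finset.mem_univ iL⟩)]
      have he : ∑ x ∈ (Finset.univ.erase i0).erase iL, s' x
          = ∑ x ∈ (Finset.univ.erase i0).erase iL, s x := by
        apply Finset.sum_congr rfl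
        intro x hx
        rw [Finset.mem_erase, Finset.mem_erase] at hx
        exact hs'eq x hx.2.1 hx.1
      rw [he, hs'i0, hs'iL]
      omega
    have hland' : ∀ j, j ≤ n → j*(j-1)/2 ≤ psum s' j := by
      intro j hj
      rcases Nat.eq_zero_or_pos j with hj0 | hj1
      · subst hj0
        simp
      rcases eq_or_lt_of_le hj with hjn | hjn
      · subst hjn
        rw [hpn', heq]
      · have ha := hstrict j hj1 hjn
        have hb := hp' j hj1 (by omega)
        omega
    have heq' : psum s' n = n*(n-1)/2 := by rw [hpn']; exact heq
    have hslack' : (∑ j ∈ Finset.Ico 1 n, (psum s' j - j*(j-1)/2)) < c := by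
      have hlt : (∑ j ∈ Finset.Ico 1 n, (psum s' j - j*(j-1)/2))
          < ∑ j ∈ Finset.Ico 1 n, (psum s j - j*(j-1)/2) := by
        apply Finset.sum_lt_sum_of_nonempty
        · exact ⟨1, by simp [Finset.mem_Ico]; omega⟩
        · intro j hj
          rw [Finset.mem_Ico] at hj
          have ha := hstrict j hj.1 hj.2
          have hb := hp' j hj.1 (by omega)
          omega
      omega
    obtain ⟨T', hT', f', hf', hsc'⟩ :=
      IHc _ hslack' s' le_rfl hmono' hland' heq'
    set u := f' iL with hudef
    set v := f' i0 with hvdef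
    have hL0 : iL ≠ i0 := by
      simp [Fin.ext_iff, hi0def, hiLdef]
      omega
    have huv : u ≠ v := fun h => hL0 (hf'.1 h)
    have hscu : score T' u = s iL + 1 := by rw [hudef, hsc' iL, hs'iL]
    have hscv : score T' v = s i0 - 1 := by rw [hvdef, hsc' i0, hs'i0]
    have hge : score T' v + 2 ≤ score T' u := by
      have hm := hmono (show i0 ≤ iL from by rw [Fin.le_def]; simp [hi0def, hiLdef])
      omega
    by_cases hb : T' u v = true
    · obtain ⟨T2, hT2, hu2, hv2, hoth2, _⟩ := flip_edge hT' huv hb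
      refine ⟨T2, hT2, f', hf', fun i => ?_⟩
      by_cases hiL : i = iL
      · rw [hiL, ← hudef, hu2, hscu]
        omega
      by_cases hi0' : i = i0
      · rw [hi0', ← hvdef, hv2, hscv]
        omega
      · have h1 : f' i ≠ u := fun h => hiL (hf'.1 h)
        have h2 : f' i ≠ v := fun h => hi0' (hf'.1 h)
        rw [hoth2 _ h1 h2, hsc' i, hs'eq i hi0' hiL]
    · have hvu : T' v u = true := by
        have h1 := hT'.2 u v huv
        rw [Bool.not_eq_true] at hb
        rw [hb] at h1
        cases h2 : T' v u
        · rw [h2] at h1; simp at h1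
        · rfl
      obtain ⟨w, hwu, hwv, huw, hwv2⟩ := exists_mid hT' huv hvu hge
      obtain ⟨T2, hT2, hu2, hw2, hoth2, hpres2⟩ := flip_edge hT' (Ne.symm hwu) huw
      have hw_v : T2 w v = true := by
        rw [hpres2 w v (Or.inl hwu) (Or.inr (Ne.symm huv))]
        exact hwv2
      obtain ⟨T3, hT3, hw3, hv3, hoth3, _⟩ := flip_edge hT2 hwv hw_v
      refine ⟨T3, hT3, f', hf', fun i => ?_⟩
      by_cases hiL : i = iL
      · rw [hiL, ← hudef]
        rw [hoth3 u (Ne.symm hwu) huv, hu2, hscu]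
        omega
      by_cases hi0' : i = i0
      · rw [hi0', ← hvdef, hv3, hoth2 v (Ne.symm huv) (Ne.symm hwv), hscv]
        omega
      · by_cases hw' : f' i = w
        · rw [hw', hw3, hw2]
          rw [← hw', hsc' i, hs'eq i hi0' hiL]
          omega
        · have h1 : f' i ≠ u := fun h => hiL (hf'.1 h)
          have h2 : f' i ≠ v := fun h => hi0' (hf'.1 h)
          rw [hoth3 _ hw' h2, hoth2 _ h1 hw', hsc' i, hs'eq i hi0' hiL]

/-- Landau's theorem: a nondecreasing sequence `s` of naturals is the score
sequence of some tournament on `n` vertices iff every initial segment of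
length `j` sums to at least `j(j-1)/2`, with equality for `j = n`. -/
theorem landau {n : ℕ} (s : Fin n → ℕ) (hmono : Monotone s) :
    (∃ T : Fin n → Fin n → Bool, IsTournament T ∧
      ∃ e : Equiv.Perm (Fin n), ∀ i : Fin n, score T (e i) = s i) ↔
    ((∀ j : ℕ, j ≤ n →
        j * (j - 1) / 2 ≤ ∑ i ∈ Finset.univ.filter (fun i : Fin n => i.val < j), s i) ∧
      ∑ i : Fin n, s i = n * (n - 1) / 2) := by
  constructor
  · rintro ⟨T, hT, e, hs⟩
    exact necessity s hT e hs
  · rintro ⟨hland, heq⟩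
    have hland' : ∀ j, j ≤ n → j*(j-1)/2 ≤ psum s j := hland
    have heq' : psum s n = n*(n-1)/2 := by
      rw [psum_top s le_rfl]
      exact heq
    obtain ⟨T, hT, f, hf, hsc⟩ :=
      sufficiency n (∑ j ∈ Finset.Ico 1 n, (psum s j - j*(j-1)/2)) s le_rfl hmono hland' heq'
    exact ⟨T, hT, Equiv.ofBijective f hf, hsc⟩
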